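/- Let (Ω, F, P) be a probability space, B ∈ F with π₀ = P(B) ∈ (0,1), G a sub-σ-algebra of F, and X = P(B | G). For any measurable set J ⊆ (π₀, 1], we have P(X ∈ J | B) ≥ P(X ∈ J | Bᶜ). -/

import Mathlib

open MeasureTheory ProbabilityTheory
open scoped ENNReal

theorem stmt_2 {Ω : Type*} [m0 : MeasurableSpace Ω] (μ : Measure Ω) [IsProbabilityMeasure μ]
    (B : Set Ω) (hB : MeasurableSet B)
    (hB0 : 0 < (μ B).toReal) (hB1 : (μ B).toReal < 1)
    (m : MeasurableSpace Ω) (hm : m ≤ m0)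
    (X : Ω → ℝ) (hX : X = MeasureTheory.condExp m μ (B.indicator fun _ => (1 : ℝ)))
    (J : Set ℝ) (hJ : MeasurableSet J) (hJsub : J ⊆ Set.Ioc ((μ B).toReal) 1) :
    μ[|Bᶜ] (X ⁻¹' J) ≤ μ[|B] (X ⁻¹' J) := by
  letI : MeasurableSpace Ω := m0
  set A := X ⁻¹' J with hA
  set p := (μ B).toReal with hp
  have hXm : StronglyMeasurable[m] X := by rw [hX]; exact stronglyMeasurable_condExp
  have hAm : MeasurableSet[m] A := hXm.measurable hJ
  have hA0 : MeasurableSet[m0] A := hm _ hAm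
  have hf : Integrable (B.indicator fun _ => (1:ℝ)) μ := (integrable_const 1).indicator hB
  -- the key integral identity
  have hint : ∫ x in A, X x ∂μ = (μ (B ∩ A)).toReal := by
    rw [hX, setIntegral_condExp hm hf hAm]
    rw [integral_indicator hB, setIntegral_const, measureReal_restrict_apply hB]
    simp [measureReal_def]
  have hXint : IntegrableOn X A μ := by
    rw [hX]; exact integrable_condExp.integrableOn
  have hlow : p * (μ A).toReal ≤ (μ (B ∩ A)).toReal := by
    rw [← hint]
    exact setIntegral_ge_of_const_le_real hA0 (measure_ne_top μ A)
      (fun x hx => le_of_lt (hJsub hx).1) hXint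
  -- basic measure facts
  have hμB : μ B ≠ ⊤ := measure_ne_top μ B
  have hμBc0 : μ Bᶜ ≠ 0 := by
    rw [prob_compl_eq_one_sub hB]
    intro h
    have h2 := tsub_eq_zero_iff_le.mp h
    have h3 : (1:ℝ≥0∞).toReal ≤ (μ B).toReal :=
      (ENNReal.toReal_le_toReal ENNReal.one_ne_top hμB).mpr h2
    simp at h3; linarith
  have hμB0' : μ B ≠ 0 := by
    intro h
    have : p = 0 := by rw [hp, h]; simp
    linarith
  have hsum : μ (B ∩ A) + μ (Bᶜ ∩ A) = μ A := by
    rw [Set.inter_comm B A, Set.inter_comm Bᶜ A, ← Set.diff_eq]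
    exact measure_inter_add_diff A hB
  have hcompl : (μ Bᶜ).toReal = 1 - p := by
    rw [prob_compl_eq_one_sub hB, ENNReal.toReal_sub_of_le prob_le_one ENNReal.one_ne_top]
    simp [hp]
  -- convert goal to reals
  rw [cond_apply hB.compl μ A, cond_apply hB μ A,
    ← ENNReal.toReal_le_toReal
      (ENNReal.mul_ne_top (by simp [hμBc0]) (measure_ne_top μ _))
      (ENNReal.mul_ne_top (by simp [hμB0']) (measure_ne_top μ _)),
    ENNReal.toReal_mul, ENNReal.toReal_mul, ENNReal.toReal_inv, ENNReal.toReal_inv, hcompl]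
  set a := (μ A).toReal with ha
  set b := (μ (B ∩ A)).toReal with hb
  have hsubR : (μ (Bᶜ ∩ A)).toReal = a - b := by
    have := congrArg ENNReal.toReal hsum
    rw [ENNReal.toReal_add (measure_ne_top μ _) (measure_ne_top μ _)] at this
    linarith
  rw [hsubR]
  have hba : b ≤ a := by
    apply ENNReal.toReal_mono (measure_ne_top μ A)
    exact measure_mono Set.inter_subset_right
  rw [← hp, inv_mul_eq_div, inv_mul_eq_div, div_le_div_iff₀ (by linarith) hB0]
  nlinarith [hlow]
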